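/- Let K ⊆ ℂⁿ be a nonempty compact set, (Ω, 𝒜) a measurable space, and f : Ω × K → ℂ a map. Then the following are equivalent: (1) there exists a sequence r₁, r₂, … of random rational functions pole-free on K such that for each ω ∈ Ω, rⱼ(ω,·) → f(ω,·) uniformly on K; (2) there exists a sequence r₁, r₂, … of random rational functions pole-free on K such that rⱼ → f uniformly on Ω × K, i.e., sup_{(ω,z) ∈ Ω × K} |rⱼ(ω,z) − f(ω,z)| → 0. -/

import Mathlib

set_option maxHeartbeats 1000000

open MvPolynomial Filter

/-- A sequence member `r : Ω → ℂⁿ → ℂ` is a random rational function pole-free on `K`: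
`r (·, z)` is measurable for each `z ∈ K` and, for each `ω`, on `K` it agrees with a
quotient `p / q` of polynomials with `q` nonvanishing on `K`. -/
def IsRandomRationalOn {Ω : Type*} [MeasurableSpace Ω] {n : ℕ}
    (r : Ω → (Fin n → ℂ) → ℂ) (K : Set (Fin n → ℂ)) : Prop :=
  (∀ z ∈ K, Measurable fun ω => r ω z) ∧
  (∀ ω : Ω, ∃ p q : MvPolynomial (Fin n) ℂ, (∀ z ∈ K, eval z q ≠ 0) ∧
    ∀ z ∈ K, r ω z = eval z p / eval z q)

/-- Corollary `surprise` of the paper. Let `K ⊆ ℂⁿ` be a nonempty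
compact set, `(Ω, 𝒜)` a measurable space and `f : Ω × K → ℂ` a mapping. There is a
sequence of random rational functions pole-free on `K` converging to `f(ω, ·)` uniformly
on `K` for each `ω` if and only if there is such a sequence converging to `f` uniformly
on `Ω × K`. -/
theorem pointwise_uniform_iff_jointly_uniform_rational
    {Ω : Type*} [MeasurableSpace Ω] {n : ℕ}
    {K : Set (Fin n → ℂ)} (hK : IsCompact K) (hKne : K.Nonempty)
    (f : Ω → (Fin n → ℂ) → ℂ) :
    (∃ r : ℕ → Ω → (Fin n → ℂ) → ℂ,
      (∀ j : ℕ, IsRandomRationalOn (r j) K) ∧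
      (∀ ω : Ω, TendstoUniformlyOn (fun j => r j ω) (f ω) atTop K)) ↔
    (∃ r : ℕ → Ω → (Fin n → ℂ) → ℂ,
      (∀ j : ℕ, IsRandomRationalOn (r j) K) ∧
      (∀ ε > (0 : ℝ), ∃ N : ℕ, ∀ j ≥ N, ∀ ω : Ω, ∀ z ∈ K, ‖r j ω z - f ω z‖ < ε)) := by
  classical
  constructor
  · rintro ⟨r, hr, hconv⟩
    -- continuity of each r k ω on K
    have hcont : ∀ k ω, ContinuousOn (r k ω) K := by
      intro k ω
      obtain ⟨p, q, hq, heq⟩ := (hr k).2 ω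
      refine ContinuousOn.congr (f := fun z => eval z p / eval z q) ?_ heq
      exact ((MvPolynomial.continuous_eval p).continuousOn).div
        ((MvPolynomial.continuous_eval q).continuousOn) hq
    -- continuity of f ω on K
    have hfcont : ∀ ω, ContinuousOn (f ω) K := fun ω =>
      (hconv ω).continuousOn (Frequently.of_forall fun k => hcont k ω)
    -- measurability of ω ↦ f ω z for z ∈ K
    have hfmeas : ∀ z ∈ K, Measurable fun ω => f ω z := by
      intro z hz
      refine measurable_of_tendsto_metrizable (f := fun k ω => r k ω z)
        (fun k => (hr k).1 z hz) ?_
      rw [tendsto_pi_nhds]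
      intro ω
      have := (hconv ω).tendsto_at hz
      simpa [tendsto_iff_dist_tendsto_zero, dist_comm] using
        (tendsto_iff_dist_tendsto_zero.1 this)
    -- countable dense subset of K
    obtain ⟨D, hDc, hDd⟩ := TopologicalSpace.exists_countable_dense K
    -- the selection property
    have hex : ∀ (j : ℕ) (ω : Ω), ∃ k : ℕ, ∀ d ∈ D, ‖r k ω (d : Fin n → ℂ) - f ω d‖ ≤ (1 : ℝ) / ((j : ℝ) + 1) := by
      intro j ω
      have hj1 : (0 : ℝ) < (j : ℝ) + 1 := by linarith [Nat.cast_nonneg (α := ℝ) j]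
      have hpos : (0 : ℝ) < (1 : ℝ) / ((j : ℝ) + 1) := div_pos one_pos hj1
      have := (Metric.tendstoUniformlyOn_iff.1 (hconv ω)) ((1 : ℝ) / ((j : ℝ) + 1)) hpos
      obtain ⟨k, hk⟩ := this.exists
      exact ⟨k, fun d _ => le_of_lt (by
        have := hk (d : Fin n → ℂ) d.2
        rwa [dist_comm, dist_eq_norm] at this)⟩
    let g : ℕ → Ω → ℕ := fun j ω => Nat.find (hex j ω)
    -- measurability of the property sets
    have hPmeas : ∀ j k : ℕ,
        MeasurableSet {ω : Ω | ∀ d ∈ D, ‖r k ω (d : Fin n → ℂ) - f ω d‖ ≤ (1 : ℝ) / ((j : ℝ) + 1)} := by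
      intro j k
      have : {ω : Ω | ∀ d ∈ D, ‖r k ω (d : Fin n → ℂ) - f ω d‖ ≤ (1 : ℝ) / ((j : ℝ) + 1)}
          = ⋂ d ∈ D, {ω : Ω | ‖r k ω (d : Fin n → ℂ) - f ω d‖ ≤ (1 : ℝ) / ((j : ℝ) + 1)} := by
        ext ω; simp
      rw [this]
      refine MeasurableSet.biInter hDc fun d _ => ?_
      have hm : Measurable fun ω => ‖r k ω (d : Fin n → ℂ) - f ω d‖ :=
        (((hr k).1 d d.2).sub (hfmeas d d.2)).norm
      exact hm measurableSet_Iic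
    -- key bound on all of K
    have hbound : ∀ (j : ℕ) (ω : Ω), ∀ z ∈ K, ‖r (g j ω) ω z - f ω z‖ ≤ (1 : ℝ) / ((j : ℝ) + 1) := by
      intro j ω z hz
      have hspec := Nat.find_spec (hex j ω)
      show ‖r (Nat.find (hex j ω)) ω z - f ω z‖ ≤ (1 : ℝ) / ((j : ℝ) + 1)
      generalize hkk : Nat.find (hex j ω) = k at hspec ⊢
      -- the set where the bound holds is closed in K and contains D
      have hC : IsClosed {w : K | ‖r k ω (w : Fin n → ℂ) - f ω w‖ ≤ (1 : ℝ) / ((j : ℝ) + 1)} := by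
        have hcontK : Continuous fun w : K => ‖r k ω (w : Fin n → ℂ) - f ω w‖ :=
          (((hcont k ω).restrict).sub ((hfcont ω).restrict)).norm
        exact isClosed_le hcontK continuous_const
      have hsub : D ⊆ {w : K | ‖r k ω (w : Fin n → ℂ) - f ω w‖ ≤ (1 : ℝ) / ((j : ℝ) + 1)} :=
        fun d hd => hspec d hd
      have hclos : closure D ⊆ {w : K | ‖r k ω (w : Fin n → ℂ) - f ω w‖ ≤ (1 : ℝ) / ((j : ℝ) + 1)} :=
        hC.closure_subset_iff.2 hsub
      have hmem : (⟨z, hz⟩ : K) ∈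
          {w : K | ‖r k ω (w : Fin n → ℂ) - f ω w‖ ≤ (1 : ℝ) / ((j : ℝ) + 1)} :=
        hclos (hDd ⟨z, hz⟩)
      exact hmem
    refine ⟨fun j ω => r (g j ω) ω, ?_, ?_⟩
    · intro j
      constructor
      · intro z hz
        exact Measurable.find (f := fun k ω => r k ω z)
          (p := fun k ω => ∀ d ∈ D, ‖r k ω (d : Fin n → ℂ) - f ω d‖ ≤ (1 : ℝ) / ((j : ℝ) + 1))
          (fun k => (hr k).1 z hz) (hPmeas j) (hex j)
      · intro ω
        exact (hr (g j ω)).2 ω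
    · intro ε hε
      obtain ⟨N, hN⟩ := exists_nat_one_div_lt hε
      refine ⟨N, fun j hj ω z hz => ?_⟩
      calc ‖r (g j ω) ω z - f ω z‖ ≤ (1 : ℝ) / ((j : ℝ) + 1) := hbound j ω z hz
        _ ≤ (1 : ℝ) / ((N : ℝ) + 1) := by
            apply one_div_le_one_div_of_le (by linarith [Nat.cast_nonneg (α := ℝ) N])
            exact_mod_cast Nat.succ_le_succ hj
        _ < ε := hN
  · rintro ⟨r, hr, hconv⟩
    refine ⟨r, hr, fun ω => ?_⟩
    rw [Metric.tendstoUniformlyOn_iff]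
    intro ε hε
    obtain ⟨N, hN⟩ := hconv ε hε
    refine eventually_atTop.2 ⟨N, fun j hj z hz => ?_⟩
    have := hN j hj ω z hz
    rwa [dist_comm, dist_eq_norm]
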